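/- Let t ∈ ℕ, let τ ≥ 0, let g₀, …, g_t : Ω → ℝ^d be square-integrable random vectors, and let w₀, …, w_t be nonnegative real numbers. Suppose that for all i ≠ j, Cov(g_i, g_j) ≤ τ·√(Var(g_i)·Var(g_j)). Then Var(Σ_{i=0}^t w_i g_i) ≤ (1 + tτ)·Σ_{i=0}^t w_i² Var(g_i). -/

import Mathlib

open MeasureTheory

/-- Variance of a square-integrable random vector `X : Ω → ℝ^d`:
`Var(X) = 𝔼[‖X − 𝔼[X]‖²]`. -/
noncomputable def vecVar {Ω : Type*} [MeasurableSpace Ω] (P : Measure Ω) {d : ℕ}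
    (X : Ω → EuclideanSpace ℝ (Fin d)) : ℝ :=
  ∫ ω, ‖X ω - ∫ ω', X ω' ∂P‖ ^ 2 ∂P

/-- Covariance of two square-integrable random vectors `X, Y : Ω → ℝ^d`:
`Cov(X, Y) = 𝔼[⟨X − 𝔼[X], Y − 𝔼[Y]⟩]`. -/
noncomputable def vecCov {Ω : Type*} [MeasurableSpace Ω] (P : Measure Ω) {d : ℕ}
    (X Y : Ω → EuclideanSpace ℝ (Fin d)) : ℝ :=
  ∫ ω, (inner ℝ (X ω - ∫ ω', X ω' ∂P) (Y ω - ∫ ω', Y ω' ∂P) : ℝ) ∂P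

section Aux
variable {Ω : Type*} [MeasurableSpace Ω] {P : Measure Ω} {d : ℕ}

lemma aux_integrable_inner {f g : Ω → EuclideanSpace ℝ (Fin d)}
    (hf : MemLp f 2 P) (hg : MemLp g 2 P) :
    Integrable (fun ω => (inner ℝ (f ω) (g ω) : ℝ)) P := by
  have h := L2.integrable_inner (𝕜 := ℝ) (hf.toLp f) (hg.toLp g)
  refine h.congr ?_
  filter_upwards [hf.coeFn_toLp, hg.coeFn_toLp] with ω h1 h2
  rw [h1, h2]

lemma vecVar_nonneg (X : Ω → EuclideanSpace ℝ (Fin d)) : 0 ≤ vecVar P X :=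
  integral_nonneg fun ω => by positivity

lemma vecVar_sum_eq [IsProbabilityMeasure P] (s : Finset ℕ)
    (g : ℕ → Ω → EuclideanSpace ℝ (Fin d))
    (hg : ∀ i ∈ s, MemLp (g i) 2 P) (w : ℕ → ℝ) :
    vecVar P (fun ω => ∑ i ∈ s, w i • g i ω)
      = ∑ i ∈ s, ∑ j ∈ s, w i * w j * vecCov P (g i) (g j) := by
  have hint : ∀ i ∈ s, Integrable (g i) P := fun i hi => (hg i hi).integrable one_le_two
  have hXmem : ∀ i ∈ s, MemLp (fun ω => g i ω - ∫ ω', g i ω' ∂P) 2 P :=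
    fun i hi => (hg i hi).sub (memLp_const _)
  have hmean : (∫ ω, ∑ i ∈ s, w i • g i ω ∂P) = ∑ i ∈ s, w i • ∫ ω', g i ω' ∂P := by
    rw [integral_finset_sum (f := fun i ω => w i • g i ω) s
      (fun i hi => ((hint i hi).smul (w i)))]
    exact Finset.sum_congr rfl fun i hi => integral_smul _ _
  unfold vecVar
  rw [hmean]
  have hpt : ∀ ω, ‖(∑ i ∈ s, w i • g i ω) - ∑ i ∈ s, w i • ∫ ω', g i ω' ∂P‖ ^ 2
      = ∑ i ∈ s, ∑ j ∈ s, (w i * w j) *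
        (inner ℝ (g i ω - ∫ ω', g i ω' ∂P) (g j ω - ∫ ω', g j ω' ∂P) : ℝ) := by
    intro ω
    rw [← Finset.sum_sub_distrib]
    simp_rw [← smul_sub]
    rw [← real_inner_self_eq_norm_sq, sum_inner]
    refine Finset.sum_congr rfl fun i _ => ?_
    rw [inner_sum]
    refine Finset.sum_congr rfl fun j _ => ?_
    rw [real_inner_smul_left, real_inner_smul_right]; ring
  simp_rw [hpt]
  rw [integral_finset_sum s (fun i hi => integrable_finset_sum s
    (fun j hj => (aux_integrable_inner (hXmem i hi) (hXmem j hj)).const_mul _))]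
  refine Finset.sum_congr rfl fun i hi => ?_
  rw [integral_finset_sum s (fun j hj =>
    (aux_integrable_inner (hXmem i hi) (hXmem j hj)).const_mul _)]
  refine Finset.sum_congr rfl fun j hj => ?_
  rw [integral_const_mul]
  rfl

end Aux

/-- If the pairwise covariances of `g₀, …, g_t` satisfy
`Cov(g_i, g_j) ≤ τ·√(Var(g_i)·Var(g_j))` for `i ≠ j`, then for nonnegative weights
`w₀, …, w_t`, `Var(Σ w_i g_i) ≤ (1 + tτ)·Σ w_i² Var(g_i)`. -/
theorem variance_weighted_sum_le {Ω : Type*} [MeasurableSpace Ω] (P : Measure Ω)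
    [IsProbabilityMeasure P] {d : ℕ} (t : ℕ) (τ : ℝ) (hτ : 0 ≤ τ)
    (g : ℕ → Ω → EuclideanSpace ℝ (Fin d))
    (hg : ∀ i, i ≤ t → MemLp (g i) 2 P)
    (w : ℕ → ℝ) (hw : ∀ i, i ≤ t → 0 ≤ w i)
    (hcov : ∀ i j, i ≤ t → j ≤ t → i ≠ j →
      vecCov P (g i) (g j) ≤ τ * Real.sqrt (vecVar P (g i) * vecVar P (g j))) :
    vecVar P (fun ω => ∑ i ∈ Finset.range (t + 1), w i • g i ω)
      ≤ (1 + t * τ) * ∑ i ∈ Finset.range (t + 1), w i ^ 2 * vecVar P (g i) := by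
  set s := Finset.range (t + 1) with hs
  have hle : ∀ i ∈ s, i ≤ t := fun i hi => Finset.mem_range_succ_iff.mp (hs ▸ hi)
  rw [vecVar_sum_eq s g (fun i hi => hg i (hle i hi)) w]
  set a : ℕ → ℝ := fun i => w i ^ 2 * vecVar P (g i) with ha
  have ha_nonneg : ∀ i, 0 ≤ a i := fun i =>
    mul_nonneg (sq_nonneg _) (vecVar_nonneg _)
  set T : ℝ := ∑ i ∈ s, a i with hT
  -- diagonal term
  have hdiag : ∀ i ∈ s, w i * w i * vecCov P (g i) (g i) = a i := by
    intro i hi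
    have : vecCov P (g i) (g i) = vecVar P (g i) := by
      unfold vecCov vecVar
      refine integral_congr_ae (Filter.Eventually.of_forall fun ω => ?_)
      exact real_inner_self_eq_norm_sq _
    rw [this, ha]; ring
  -- off-diagonal bound
  have hoff : ∀ i ∈ s, ∀ j ∈ s, j ≠ i →
      w i * w j * vecCov P (g i) (g j) ≤ τ / 2 * (a i + a j) := by
    intro i hi j hj hne
    have hVi := vecVar_nonneg (P := P) (g i)
    have hVj := vecVar_nonneg (P := P) (g j)
    have h1 : w i * w j * vecCov P (g i) (g j)
        ≤ w i * w j * (τ * Real.sqrt (vecVar P (g i) * vecVar P (g j))) := by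
      exact mul_le_mul_of_nonneg_left (hcov i j (hle i hi) (hle j hj) (Ne.symm hne))
        (mul_nonneg (hw i (hle i hi)) (hw j (hle j hj)))
    refine h1.trans ?_
    rw [Real.sqrt_mul hVi]
    have hsi := Real.sq_sqrt hVi
    have hsj := Real.sq_sqrt hVj
    simp only [ha]
    set si := Real.sqrt (vecVar P (g i))
    set sj := Real.sqrt (vecVar P (g j))
    have h2 : (w i * si) * (w j * sj) ≤ ((w i * si) ^ 2 + (w j * sj) ^ 2) / 2 := by
      nlinarith [sq_nonneg (w i * si - w j * sj)]
    calc w i * w j * (τ * (si * sj)) = τ * ((w i * si) * (w j * sj)) := by ring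
      _ ≤ τ * (((w i * si) ^ 2 + (w j * sj) ^ 2) / 2) := by
          exact mul_le_mul_of_nonneg_left h2 hτ
      _ = τ / 2 * (w i ^ 2 * vecVar P (g i) + w j ^ 2 * vecVar P (g j)) := by
          rw [mul_pow, mul_pow, hsi, hsj]; ring
  calc ∑ i ∈ s, ∑ j ∈ s, w i * w j * vecCov P (g i) (g j)
      = ∑ i ∈ s, (a i + ∑ j ∈ s.erase i, w i * w j * vecCov P (g i) (g j)) := by
        refine Finset.sum_congr rfl fun i hi => ?_
        rw [← hdiag i hi]
        exact (Finset.add_sum_erase s (fun j => w i * w j * vecCov P (g i) (g j)) hi).symm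
    _ ≤ ∑ i ∈ s, (a i + ∑ j ∈ s.erase i, τ / 2 * (a i + a j)) := by
        refine Finset.sum_le_sum fun i hi => ?_
        refine add_le_add_right (Finset.sum_le_sum fun j hj => ?_) _
        exact hoff i hi j (Finset.mem_of_mem_erase hj) (Finset.ne_of_mem_erase hj)
    _ = (1 + t * τ) * T := by
        have hcard : ∀ i ∈ s, (s.erase i).card = t := by
          intro i hi
          rw [Finset.card_erase_of_mem hi, hs, Finset.card_range]
          simp
        have hsum_erase : ∀ i ∈ s, ∑ j ∈ s.erase i, a j = T - a i := by
          intro i hi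
          rw [hT, Finset.sum_erase_eq_sub hi]
        have : ∀ i ∈ s, a i + ∑ j ∈ s.erase i, τ / 2 * (a i + a j)
            = a i + τ / 2 * (t * a i + (T - a i)) := by
          intro i hi
          congr 1
          rw [← Finset.mul_sum, Finset.sum_add_distrib, Finset.sum_const,
            hcard i hi, hsum_erase i hi, nsmul_eq_mul]
        rw [Finset.sum_congr rfl this]
        have hexp : ∀ i ∈ s, a i + τ / 2 * (t * a i + (T - a i))
            = (1 + τ * (t - 1) / 2) * a i + τ / 2 * T := fun i _ => by ring
        rw [Finset.sum_congr rfl hexp, Finset.sum_add_distrib, ← Finset.mul_sum,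
          Finset.sum_const, hs, Finset.card_range, ← hT, nsmul_eq_mul]
        push_cast
        ring
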